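/- Let f ∈ G^1 and let g = f^{•−1} be its inverse for shifted composition. Then the shifted substitution g(xf(x)) is the Cauchy multiplicative inverse of f: f · g(xf(x)) = 1 = g(xf(x)) · f. -/

import Mathlib

/-- Words over the alphabet of positive integers. -/
abbrev Word : Type := List ℕ+

variable {A : Type*}

/-- The constant series `1`: coefficient `1` on the empty word, `0` elsewhere. -/
def one [CommRing A] : Word → A := fun w => if w = [] then 1 else 0

/-- Cauchy product of noncommutative series:
`(f·g)(w) = Σ f(u) g(v)` over all factorizations `w = u ++ v`. -/
def cauchy [CommRing A] (f g : Word → A) : Word → A := fun w =>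
  ∑ k ∈ Finset.range (w.length + 1), f (w.take k) * g (w.drop k)

/-- The subword of `w` consisting of the letters at positions in `S` (in increasing order). -/
def subword (w : Word) (S : Finset ℕ) : Word :=
  ((w.zipIdx.map Prod.swap).filter (fun p => decide (p.1 ∈ S))).map Prod.snd

/-- The (possibly empty) factor of `w` occupying the positions strictly between `s` and the
next element of `S` after `s` (or the end of the word if there is no such element). -/
def gapAfter (w : Word) (S : Finset ℕ) (s : ℕ) : Word :=
  ((w.zipIdx.map Prod.swap).filter (fun p => decide (s < p.1 ∧ ∀ j ∈ S, j ≤ s ∨ p.1 < j))).map Prod.snd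

/-- Shifted substitution `f(xg(x))`: its constant coefficient is `f(∅)`, and its coefficient
on a nonempty word `w = a_1⋯a_n` is the sum, over subsets `S = {s_1<⋯<s_k}` of the positions
of `w` containing the first position, of `f(a_{s_1}⋯a_{s_k})·g(w_{(s_1,s_2)})⋯g(w_{(s_k,n+1)})`,
where `w_{(s_j,s_{j+1})}` is the factor of `w` strictly between positions `s_j` and `s_{j+1}`. -/
def subst [CommRing A] (f g : Word → A) : Word → A := fun w =>
  if w = [] then f []
  else ∑ S ∈ (Finset.range w.length).powerset.filter (fun S => 0 ∈ S),
    f (subword w S) * ∏ s ∈ S, g (gapAfter w S s)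

/-- Shifted composition `f • g := g · f(xg(x))`. -/
def bullet [CommRing A] (f g : Word → A) : Word → A := cauchy g (subst f g)

/-- The right-multiplication left inverse series of `f`. -/
def linv [CommRing A] (f : Word → A) : Word → A
  | [] => 1
  | a :: t => -∑ k ∈ (Finset.range (t.length + 1)).attach,
      linv f ((a :: t).take k.1) * f ((a :: t).drop k.1)
termination_by w => w.length
decreasing_by
  have hk := k.2
  simp only [Finset.mem_range] at hk
  simp [List.length_take]
  omega

lemma one_cauchy [CommRing A] (f : Word → A) : cauchy one f = f := by
  funext w
  unfold cauchy
  rw [Finset.sum_eq_single 0]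
  · simp [one]
  · intro k hk hk0
    have : ¬ (w.take k = []) := by
      rcases w with _ | ⟨a, t⟩
      · simp at hk; omega
      · cases k with
        | zero => omega
        | succ m => simp
    simp [one, this]
  · simp

lemma cauchy_one [CommRing A] (f : Word → A) : cauchy f one = f := by
  funext w
  unfold cauchy
  rw [Finset.sum_eq_single w.length]
  · simp [one]
  · intro k hk hkn
    simp only [Finset.mem_range] at hk
    have : ¬ (w.drop k = []) := by
      simp only [List.drop_eq_nil_iff]
      omega
    simp [one, this]
  · simp

lemma cauchy_assoc [CommRing A] (f g h : Word → A) :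
    cauchy (cauchy f g) h = cauchy f (cauchy g h) := by
  funext w
  set n := w.length with hn
  unfold cauchy
  have L : ∑ k ∈ Finset.range (n + 1),
      (∑ j ∈ Finset.range ((w.take k).length + 1), f ((w.take k).take j) * g ((w.take k).drop j))
        * h (w.drop k)
      = ∑ p ∈ (Finset.range (n + 1)).sigma (fun k => Finset.range (k + 1)),
          f (w.take p.2) * (g ((w.drop p.2).take (p.1 - p.2)) * h (w.drop p.1)) := by
    rw [Finset.sum_sigma]
    apply Finset.sum_congr rfl
    intro k hk
    simp only [Finset.mem_range] at hk
    have hlen : (w.take k).length = k := by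
      simp [List.length_take]; omega
    rw [hlen, Finset.sum_mul]
    apply Finset.sum_congr rfl
    intro j hj
    simp only [Finset.mem_range] at hj
    rw [List.take_take, min_eq_left (by omega), List.drop_take, mul_assoc]
  have R : ∑ k ∈ Finset.range (n + 1),
      f (w.take k) * ∑ j ∈ Finset.range ((w.drop k).length + 1),
        g ((w.drop k).take j) * h ((w.drop k).drop j)
      = ∑ p ∈ (Finset.range (n + 1)).sigma (fun j => Finset.range (n - j + 1)),
          f (w.take p.1) * (g ((w.drop p.1).take p.2) * h (w.drop (p.1 + p.2))) := by
    rw [Finset.sum_sigma]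
    apply Finset.sum_congr rfl
    intro k hk
    simp only [Finset.mem_range] at hk
    have hlen : (w.drop k).length = n - k := by simp [hn]
    rw [hlen, Finset.mul_sum]
    apply Finset.sum_congr rfl
    intro j hj
    rw [List.drop_drop]
  rw [L, R]
  apply Finset.sum_nbij' (fun p => ⟨p.2, p.1 - p.2⟩) (fun p => ⟨p.1 + p.2, p.1⟩)
  · intro p hp
    simp only [Finset.mem_sigma, Finset.mem_range] at hp ⊢
    omega
  · intro p hp
    simp only [Finset.mem_sigma, Finset.mem_range] at hp ⊢
    omega
  · intro p hp
    simp only [Finset.mem_sigma, Finset.mem_range] at hp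
    ext <;> simp <;> omega
  · intro p hp
    simp only [Finset.mem_sigma, Finset.mem_range] at hp
    ext <;> simp <;> omega
  · intro p hp
    simp only [Finset.mem_sigma, Finset.mem_range] at hp
    have e : p.2 + (p.1 - p.2) = p.1 := by omega
    rw [e]

lemma linv_cauchy [CommRing A] (f : Word → A) (hf : f [] = 1) :
    cauchy (linv f) f = one := by
  funext w
  rcases w with _ | ⟨a, t⟩
  · simp [cauchy, linv, one, hf]
  · unfold cauchy one
    simp only [List.length_cons, if_neg (List.cons_ne_nil a t)]
    rw [Finset.sum_range_succ]
    have h1 : (a :: t).take (t.length + 1) = a :: t := by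
      simp
    have h2 : (a :: t).drop (t.length + 1) = [] := by
      simp
    rw [h1, h2, hf, mul_one]
    have h3 : linv f (a :: t)
        = -∑ k ∈ Finset.range (t.length + 1), linv f ((a :: t).take k) * f ((a :: t).drop k) := by
      rw [linv]
      rw [← Finset.sum_attach (Finset.range (t.length + 1))
        (fun k => linv f ((a :: t).take k) * f ((a :: t).drop k))]
    rw [h3]
    ring

/-- if `f ∈ G^1` and `g = f^{•−1}` is its inverse for shifted composition,
then the shifted substitution `g(xf(x))` is the Cauchy multiplicative inverse of `f`:
`f · g(xf(x)) = 1 = g(xf(x)) · f`. -/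
theorem stmt10 [CommRing A] (f g : Word → A) (hf : f [] = 1) (hg : g [] = 1)
    (hinv₁ : bullet g f = one) (hinv₂ : bullet f g = one) :
    cauchy f (subst g f) = one ∧ cauchy (subst g f) f = one := by
  have h1 : cauchy f (subst g f) = one := hinv₁
  refine ⟨h1, ?_⟩
  have key : subst g f = linv f := by
    calc subst g f = cauchy one (subst g f) := (one_cauchy _).symm
      _ = cauchy (cauchy (linv f) f) (subst g f) := by rw [linv_cauchy f hf]
      _ = cauchy (linv f) (cauchy f (subst g f)) := cauchy_assoc _ _ _
      _ = cauchy (linv f) one := by rw [h1]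
      _ = linv f := cauchy_one _
  rw [key, linv_cauchy f hf]
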